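/- arXiv:1112.0991 — 8 statements merged into one kernel-verified Lean document; each statement's English description precedes it below -/
import Mathlib

section
/- Let B be a binomial ring and n ∈ ℕ. The map φ : B → B given by φ(x) = Ring.choose x n is numerical of degree ≤ n, i.e. (i) for all x : Fin (n+1) → B, ∑_{S ⊆ Fin (n+1)} (−1)^{n+1−|S|} · Ring.choose (∑_{i∈S} x i) n = 0, and (ii) for all r, x ∈ B, Ring.choose (r·x) n = ∑_{k=0}^{n} Ring.choose r k · (∑_{j=0}^{k} (−1)^{k−j} · binom(k,j) · Ring.choose (j·x) n). -/
/-- The deviation Δ_k φ x. -/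
def delta {M N : Type*} [AddCommMonoid M] [AddCommGroup N]
    (φ : M → N) (k : ℕ) (x : M) : N :=
  ∑ j ∈ Finset.range (k + 1), ((-1 : ℤ) ^ (k - j) * (k.choose j : ℤ)) • φ (j • x)

/-- Numerical map of degree ≤ n. -/
def IsNumerical (B : Type*) {M N : Type*} [CommRing B] [BinomialRing B]
    [AddCommMonoid M] [Module B M] [AddCommGroup N] [Module B N]
    (φ : M → N) (n : ℕ) : Prop :=
  (∀ x : Fin (n + 1) → M,
      ∑ S : Finset (Fin (n + 1)), ((-1 : ℤ) ^ (n + 1 - S.card)) • φ (∑ i ∈ S, x i) = 0) ∧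
  ∀ (r : B) (x : M), φ (r • x) = ∑ k ∈ Finset.range (n + 1), Ring.choose r k • delta φ k x

section Aux
open Finset Polynomial

lemma neg_one_pow_sub' {k j : ℕ} (h : j ≤ k) : ((-1:ℤ))^(k-j) = (-1)^k * (-1)^j := by
  conv_rhs => rw [← Nat.sub_add_cancel h, pow_add, mul_assoc, ← pow_add]
  rw [Even.neg_one_pow ⟨j, rfl⟩, mul_one]

lemma vand_range {B : Type*} [CommRing B] [BinomialRing B] (a b : B) (m : ℕ) :
    Ring.choose (a + b) m = ∑ j ∈ range (m+1), Ring.choose a j * Ring.choose b (m - j) := by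
  rw [Ring.add_choose_eq m (Commute.all a b), Finset.Nat.sum_antidiagonal_eq_sum_range_succ_mk]

lemma descPoch_smeval_eq_eval {S : Type*} [CommRing S] (b : S) (n : ℕ) :
    (descPochhammer ℤ n).smeval b = (descPochhammer S n).eval b := by
  rw [← descPochhammer_map (Int.castRingHom S) n, eval_map, ← eval₂_smulOneHom_eq_smeval]
  congr 1
  exact RingHom.ext_int _ _

lemma factorial_mul_ringChoose {B : Type*} [CommRing B] [BinomialRing B] (b : B) (n : ℕ) :
    ((n.factorial : ℕ) : B) * Ring.choose b n = (descPochhammer B n).eval b := by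
  rw [← descPoch_smeval_eq_eval, Ring.descPochhammer_eq_factorial_smul_choose, nsmul_eq_mul]

lemma hom_descPoch {R S : Type*} [CommRing R] [CommRing S] (f : R →+* S) (k : ℕ) (a : R) :
    f ((descPochhammer R k).eval a) = (descPochhammer S k).eval (f a) := by
  rw [← descPochhammer_map f k, eval_map, eval₂_at_apply]

lemma keyL {B : Type*} [CommRing B] [BinomialRing B] {ι : Type*} [DecidableEq ι] (m : ℕ) :
    ∀ (T : Finset ι) (x : ι → B), m < T.card →
      ∑ S ∈ T.powerset, ((-1:ℤ) ^ (T.card - S.card)) • Ring.choose (∑ i ∈ S, x i) m = 0 := by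
  induction m using Nat.strong_induction_on with
  | _ m IH =>
    intro T x hT
    obtain ⟨a, ha⟩ := Finset.card_pos.mp (Nat.lt_of_le_of_lt (Nat.zero_le m) hT)
    set T' := T.erase a with hT'
    have haT' : a ∉ T' := Finset.notMem_erase a T
    have hins : T = insert a T' := (Finset.insert_erase ha).symm
    have hcard : T.card = T'.card + 1 := by
      rw [hins, Finset.card_insert_of_notMem haT']
    have hcard' : m ≤ T'.card := by omega
    rw [hins, Finset.sum_powerset_insert haT']
    have hstep : ∀ t ∈ T'.powerset,
        ((-1:ℤ) ^ ((insert a T').card - t.card)) • Ring.choose (∑ i ∈ t, x i) m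
          + ((-1:ℤ) ^ ((insert a T').card - (insert a t).card)) •
              Ring.choose (∑ i ∈ insert a t, x i) m
        = ∑ j ∈ range m, Ring.choose (x a) (j+1) *
            (((-1:ℤ) ^ (T'.card - t.card)) • Ring.choose (∑ i ∈ t, x i) (m - (j+1))) := by
      intro t ht
      rw [Finset.mem_powerset] at ht
      have hat : a ∉ t := fun h => haT' (ht h)
      have htc : t.card ≤ T'.card := Finset.card_le_card ht
      rw [Finset.sum_insert hat, Finset.card_insert_of_notMem hat,
        ← hins, hcard]
      have h1 : T'.card + 1 - t.card = (T'.card - t.card) + 1 := by omega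
      have h2 : T'.card + 1 - (t.card + 1) = T'.card - t.card := by omega
      rw [h1, h2, pow_succ, vand_range (x a) (∑ i ∈ t, x i) m, Finset.sum_range_succ']
      simp only [Ring.choose_zero_right, one_mul, Nat.sub_zero]
      rw [smul_add, mul_neg_one, neg_smul,
        add_comm (((-1:ℤ) ^ (T'.card - t.card)) • ∑ k ∈ range m, _),
        ← add_assoc, neg_add_cancel, zero_add, Finset.smul_sum]
      exact Finset.sum_congr rfl fun j _ => (mul_smul_comm _ _ _).symm
    rw [add_comm, ← Finset.sum_add_distrib]
    · calc ∑ t ∈ T'.powerset, _ = ∑ t ∈ T'.powerset, ∑ j ∈ range m, Ring.choose (x a) (j+1) *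
            (((-1:ℤ) ^ (T'.card - t.card)) • Ring.choose (∑ i ∈ t, x i) (m - (j+1))) := by
            refine Finset.sum_congr rfl ?_
            intro t ht
            rw [add_comm]
            exact hstep t ht
      _ = ∑ j ∈ range m, Ring.choose (x a) (j+1) *
            (∑ t ∈ T'.powerset, ((-1:ℤ) ^ (T'.card - t.card)) •
              Ring.choose (∑ i ∈ t, x i) (m - (j+1))) := by
            rw [Finset.sum_comm]
            exact Finset.sum_congr rfl fun j _ => (Finset.mul_sum _ _ _).symm
      _ = 0 := by
            refine Finset.sum_eq_zero fun j hj => ?_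
            rw [mem_range] at hj
            rw [IH (m - (j+1)) (by omega) T' x (by omega), mul_zero]

theorem part1 {B : Type*} [CommRing B] [BinomialRing B] (n : ℕ) (x : Fin (n+1) → B) :
    ∑ S : Finset (Fin (n + 1)), ((-1 : ℤ) ^ (n + 1 - S.card)) • Ring.choose (∑ i ∈ S, x i) n = 0 := by
  have h := keyL (B := B) n (Finset.univ : Finset (Fin (n+1))) x
    (by simp)
  simpa using h

lemma orth (m j : ℕ) (hj : j ≤ m) :
    ∑ k ∈ range (m+1), ((-1:ℤ)^(k-j) * (m.choose k) * (k.choose j))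
      = if j = m then 1 else 0 := by
  have h1 : ∑ k ∈ range (m+1), ((-1:ℤ)^(k-j) * (m.choose k) * (k.choose j))
      = ∑ k ∈ Ico j (m+1), ((-1:ℤ)^(k-j) * (m.choose k) * (k.choose j)) := by
    refine (Finset.sum_subset (by rw [Finset.range_eq_Ico]; exact Finset.Ico_subset_Ico_left (Nat.zero_le j)) ?_).symm
    intro k _ hk
    have : k < j := by
      rcases Nat.lt_or_ge k j with h | h
      · exact h
      · exact absurd (Finset.mem_Ico.mpr ⟨h, by simpa using ‹k ∈ range (m+1)›⟩) hk
    rw [Nat.choose_eq_zero_of_lt this]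
    simp
  rw [h1, Finset.sum_Ico_eq_sum_range]
  have h2 : m + 1 - j = (m - j) + 1 := by omega
  rw [h2]
  have h3 : ∀ t ∈ range ((m-j)+1), ((-1:ℤ)^(j+t-j) * (m.choose (j+t)) * ((j+t).choose j))
      = (m.choose j : ℤ) * ((-1)^t * ((m-j).choose t)) := by
    intro t ht
    rw [mem_range] at ht
    have htm : j + t ≤ m := by omega
    have hmul : m.choose (j+t) * (j+t).choose j = m.choose j * (m-j).choose t := by
      have := Nat.choose_mul (n := m) (Nat.le_add_right j t)
      simpa using this
    have : ((m.choose (j+t)) * ((j+t).choose j) : ℤ) = (m.choose j : ℤ) * ((m-j).choose t) := by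
      exact_mod_cast congrArg (Nat.cast : ℕ → ℤ) hmul
    rw [Nat.add_sub_cancel_left, mul_assoc, this]
    ring
  rw [Finset.sum_congr rfl h3, ← Finset.mul_sum, Int.alternating_sum_range_choose]
  rcases eq_or_ne j m with h | h
  · simp [h]
  · have : m - j ≠ 0 := by omega
    simp [this, h]

lemma newton {A : Type*} [AddCommGroup A] (g : ℕ → A) (m : ℕ) :
    ∑ k ∈ range (m+1), m.choose k •
      (∑ j ∈ range (k+1), ((-1:ℤ)^(k-j) * (k.choose j)) • g j) = g m := by
  have h1 : ∀ k ∈ range (m+1), m.choose k •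
      (∑ j ∈ range (k+1), ((-1:ℤ)^(k-j) * (k.choose j)) • g j)
      = ∑ j ∈ range (m+1), ((-1:ℤ)^(k-j) * (m.choose k) * (k.choose j)) • g j := by
    intro k hk
    rw [mem_range] at hk
    rw [Finset.smul_sum]
    have e1 : ∑ j ∈ range (k+1), m.choose k • (((-1:ℤ)^(k-j) * (k.choose j)) • g j)
        = ∑ j ∈ range (m+1), m.choose k • (((-1:ℤ)^(k-j) * (k.choose j)) • g j) := by
      refine Finset.sum_subset (Finset.range_subset_range.mpr (by omega)) ?_
      intro j _ hj
      rw [mem_range, not_lt] at hj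
      rw [Nat.choose_eq_zero_of_lt (by omega : k < j)]
      simp
    rw [e1]
    refine Finset.sum_congr rfl fun j _ => ?_
    rw [← natCast_zsmul, smul_smul]
    congr 1
    ring
  rw [Finset.sum_congr rfl h1, Finset.sum_comm]
  have h2 : ∀ j ∈ range (m+1),
      ∑ k ∈ range (m+1), ((-1:ℤ)^(k-j) * (m.choose k) * (k.choose j)) • g j
      = (if j = m then (1:ℤ) else 0) • g j := by
    intro j hj
    rw [mem_range] at hj
    rw [← Finset.sum_smul, orth m j (by omega)]
  rw [Finset.sum_congr rfl h2]
  have h3 : ∀ j ∈ range (m+1), (if j = m then (1:ℤ) else 0) • g j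
      = if j = m then g j else 0 := by
    intro j _
    split <;> simp
  rw [Finset.sum_congr rfl h3, Finset.sum_ite_eq' (range (m+1)) m g,
    if_pos (self_mem_range_succ m)]

lemma altD (d : ℕ) : ∀ k : ℕ, d < k →
    (∑ j ∈ range (k+1), ((-1:ℤ)^j * (k.choose j) * (j:ℤ)^d)) = 0 := by
  induction d using Nat.strong_induction_on with
  | _ d IH =>
    intro k hk
    rcases d with _ | e
    · simpa [mul_one] using Int.alternating_sum_range_choose_of_ne (by omega : k ≠ 0)
    · obtain ⟨k', rfl⟩ : ∃ k', k = k' + 1 := ⟨k - 1, by omega⟩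
      rw [Finset.sum_range_succ']
      simp only [Nat.cast_zero, zero_pow (Nat.succ_ne_zero e), mul_zero, add_zero]
      have hterm : ∀ i : ℕ, ((-1:ℤ)^(i+1) * (((k'+1).choose (i+1) : ℕ) : ℤ) * ((i+1 : ℕ) : ℤ)^(e+1))
          = (-(k'+1) : ℤ) * ∑ c ∈ range (e+1), ((e.choose c) : ℤ) * ((-1:ℤ)^i * (k'.choose i) * (i:ℤ)^c) := by
        intro i
        have hmc : (((k'+1).choose (i+1) : ℕ) : ℤ) * ((i:ℤ)+1) = (k'+1 : ℤ) * (k'.choose i) := by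
          have h2 : ((k'+1) * k'.choose i : ℕ) = ((k'+1).choose (i+1) * (i+1) : ℕ) :=
            Nat.add_one_mul_choose_eq k' i
          exact_mod_cast (congrArg (Nat.cast : ℕ → ℤ) h2).symm
        have hbinom : ((i:ℤ)+1)^e = ∑ c ∈ range (e+1), (i:ℤ)^c * (e.choose c) := by
          simpa using add_pow (i:ℤ) 1 e
        push_cast
        calc (-1:ℤ)^(i+1) * (((k'+1).choose (i+1) : ℕ) : ℤ) * ((i:ℤ)+1)^(e+1)
            = (-1:ℤ)^i * -1 * ((i:ℤ)+1)^e * ((((k'+1).choose (i+1) : ℕ) : ℤ) * ((i:ℤ)+1)) := by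
              rw [pow_succ, pow_succ]; ring
          _ = (-1:ℤ)^i * -1 * ((i:ℤ)+1)^e * ((k'+1 : ℤ) * (k'.choose i)) := by rw [hmc]
          _ = (-(k'+1) : ℤ) * ((-1:ℤ)^i * (k'.choose i) * ((i:ℤ)+1)^e) := by ring
          _ = (-(k'+1) : ℤ) * ((-1:ℤ)^i * (k'.choose i) *
                ∑ c ∈ range (e+1), (i:ℤ)^c * (e.choose c)) := by rw [hbinom]
          _ = _ := by
                rw [Finset.mul_sum, Finset.mul_sum, Finset.mul_sum]
                refine Finset.sum_congr rfl fun c _ => ?_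
                ring
      calc ∑ i ∈ range (k'+1), ((-1:ℤ)^(i+1) * (((k'+1).choose (i+1) : ℕ) : ℤ) * ((i+1 : ℕ) : ℤ)^(e+1))
          = ∑ i ∈ range (k'+1), (-(k'+1) : ℤ) *
              ∑ c ∈ range (e+1), ((e.choose c) : ℤ) * ((-1:ℤ)^i * (k'.choose i) * (i:ℤ)^c) := by
            exact Finset.sum_congr rfl fun i _ => hterm i
        _ = (-(k'+1) : ℤ) * ∑ c ∈ range (e+1), ((e.choose c) : ℤ) *
              ∑ i ∈ range (k'+1), ((-1:ℤ)^i * (k'.choose i) * (i:ℤ)^c) := by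
            rw [← Finset.mul_sum, Finset.sum_comm]
            congr 1
            exact Finset.sum_congr rfl fun c _ => (Finset.mul_sum _ _ _).symm
        _ = 0 := by
            rw [Finset.sum_eq_zero, mul_zero]
            intro c hc
            rw [mem_range] at hc
            rw [IH c (by omega) k' (by omega), mul_zero]


lemma deltaPoch {S : Type*} [CommRing S] {n k : ℕ} (h : n < k) (y : S) :
    ∑ j ∈ range (k+1), ((-1:ℤ)^(k-j) * (k.choose j)) •
      (descPochhammer S n).eval ((j:S)*y) = 0 := by
  have hdeg : (descPochhammer S n).natDegree < n + 1 := by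
    rw [← descPochhammer_map (Int.castRingHom S) n]
    exact Nat.lt_succ_of_le (le_trans Polynomial.natDegree_map_le
      (le_of_eq (descPochhammer_natDegree (R := ℤ) n)))
  have hev : ∀ j : ℕ, (descPochhammer S n).eval ((j:S)*y)
      = ∑ i ∈ range (n+1), (descPochhammer S n).coeff i * ((j:S)^i * y^i) := by
    intro j
    rw [Polynomial.eval_eq_sum_range' hdeg]
    exact Finset.sum_congr rfl fun i _ => by rw [mul_pow]
  calc ∑ j ∈ range (k+1), ((-1:ℤ)^(k-j) * (k.choose j)) •
        (descPochhammer S n).eval ((j:S)*y)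
      = ∑ i ∈ range (n+1), ∑ j ∈ range (k+1),
          ((descPochhammer S n).coeff i * y^i) * (((-1:ℤ)^(k-j) * (k.choose j) * (j:ℤ)^i : ℤ) : S) := by
        rw [Finset.sum_comm]
        refine Finset.sum_congr rfl fun j hj => ?_
        rw [hev j, Finset.smul_sum]
        refine Finset.sum_congr rfl fun i _ => ?_
        rw [zsmul_eq_mul]
        push_cast
        ring
    _ = 0 := by
        refine Finset.sum_eq_zero fun i hi => ?_
        rw [mem_range] at hi
        rw [← Finset.mul_sum, ← Int.cast_sum]
        have hz : ∑ j ∈ range (k+1), ((-1:ℤ)^(k-j) * (k.choose j) * (j:ℤ)^i) = 0 := by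
          have he : ∀ j ∈ range (k+1), ((-1:ℤ)^(k-j) * (k.choose j) * (j:ℤ)^i)
              = (-1:ℤ)^k * ((-1:ℤ)^j * (k.choose j) * (j:ℤ)^i) := by
            intro j hj
            rw [mem_range] at hj
            rw [neg_one_pow_sub' (by omega : j ≤ k)]
            ring
          rw [Finset.sum_congr rfl he, ← Finset.mul_sum, altD i k (by omega), mul_zero]
        rw [hz, Int.cast_zero, mul_zero]

lemma key2 {S : Type*} [CommRing S] (n m : ℕ) (y : S) :
    (descPochhammer S n).eval ((m:S)*y) =
    ∑ k ∈ range (n+1), m.choose k •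
      (∑ j ∈ range (k+1), ((-1:ℤ)^(k-j) * (k.choose j)) •
        (descPochhammer S n).eval ((j:S)*y)) := by
  set g : ℕ → S := fun j => (descPochhammer S n).eval ((j:S)*y) with hg
  set T : ℕ → S := fun k => m.choose k •
      (∑ j ∈ range (k+1), ((-1:ℤ)^(k-j) * (k.choose j)) • g j) with hT
  have h1 : ∑ k ∈ range (n+1), T k = ∑ k ∈ range (max m n + 1), T k := by
    refine Finset.sum_subset (Finset.range_subset_range.mpr (by omega)) ?_
    intro k hk hk'
    rw [mem_range] at hk
    rw [mem_range, not_lt] at hk'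
    rw [hT]
    simp only
    rw [deltaPoch (by omega : n < k) y, smul_zero]
  have h2 : ∑ k ∈ range (m+1), T k = ∑ k ∈ range (max m n + 1), T k := by
    refine Finset.sum_subset (Finset.range_subset_range.mpr (by omega)) ?_
    intro k hk hk'
    rw [mem_range] at hk
    rw [mem_range, not_lt] at hk'
    rw [hT]
    simp only
    rw [Nat.choose_eq_zero_of_lt (by omega : m < k), zero_smul]
  calc g m = ∑ k ∈ range (m+1), T k := (newton g m).symm
    _ = ∑ k ∈ range (max m n + 1), T k := h2
    _ = ∑ k ∈ range (n+1), T k := h1.symm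

lemma master {S : Type*} [CommRing S] (n : ℕ) (r x : S) :
    n.factorial • (descPochhammer S n).eval (r * x) =
    ∑ k ∈ range (n+1), (n.factorial / k.factorial) •
      ((descPochhammer S k).eval r *
        ∑ j ∈ range (k+1), ((-1:ℤ)^(k-j) * (k.choose j)) •
          (descPochhammer S n).eval ((j:S)*x)) := by
  set A := Polynomial (Polynomial ℤ) with hA
  have hpoly :
      n.factorial • (descPochhammer A n).eval (X * C X) =
      ∑ k ∈ range (n+1), (n.factorial / k.factorial) •
        ((descPochhammer A k).eval X *
          ∑ j ∈ range (k+1), ((-1:ℤ)^(k-j) * (k.choose j)) •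
            (descPochhammer A n).eval ((j:A) * C X)) := by
    rw [← sub_eq_zero]
    apply Polynomial.eq_zero_of_infinite_isRoot
    apply Set.infinite_of_injective_forall_mem
      (f := fun m : ℕ => (m : Polynomial ℤ))
    · exact Nat.cast_injective
    · intro m
      show IsRoot _ _
      unfold IsRoot
      rw [eval_sub, sub_eq_zero]
      have hre : ∀ p : A, eval ((m : ℕ) : Polynomial ℤ) p
          = evalRingHom ((m : ℕ) : Polynomial ℤ) p := fun _ => rfl
      rw [hre, hre, map_nsmul, map_sum]
      simp +zetaDelta only [map_mul, hom_descPoch, map_nsmul, map_zsmul, map_sum, map_natCast]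
      simp only [coe_evalRingHom, eval_X, eval_C]
      -- now an identity in ℤ[X]
      have hper : ∀ k ∈ range (n+1),
          (n.factorial / k.factorial) •
            ((descPochhammer (Polynomial ℤ) k).eval ((m : ℕ) : Polynomial ℤ) *
              ∑ j ∈ range (k+1), ((-1:ℤ)^(k-j) * (k.choose j)) •
                (descPochhammer (Polynomial ℤ) n).eval ((j : Polynomial ℤ) * X))
          = n.factorial • (m.choose k •
              ∑ j ∈ range (k+1), ((-1:ℤ)^(k-j) * (k.choose j)) •
                (descPochhammer (Polynomial ℤ) n).eval ((j : Polynomial ℤ) * X)) := by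
        intro k hk
        rw [mem_range] at hk
        rw [descPochhammer_eval_eq_descFactorial, ← nsmul_eq_mul, smul_smul, smul_smul]
        congr 1
        rw [Nat.descFactorial_eq_factorial_mul_choose, ← mul_assoc,
          Nat.div_mul_cancel (Nat.factorial_dvd_factorial (by omega : k ≤ n))]
      rw [Finset.sum_congr rfl hper, ← Finset.smul_sum, ← key2 n m X]
  -- transfer to S
  have htr := congrArg (eval₂RingHom (eval₂RingHom (Int.castRingHom S) x) r) hpoly
  simp +zetaDelta only [map_nsmul, map_sum, map_mul, map_zsmul, map_natCast, hom_descPoch] at htr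
  simpa only [coe_eval₂RingHom, eval₂_X, eval₂_C] using htr

theorem part2 {B : Type*} [CommRing B] [BinomialRing B] (n : ℕ) (r x : B) :
    Ring.choose (r • x) n = ∑ k ∈ Finset.range (n + 1),
      Ring.choose r k • delta (fun y : B => Ring.choose y n) k x := by
  have hNS : ∀ (m : ℕ) (b : B), m • b = (m : B) * b := fun m b => nsmul_eq_mul m b
  refine (BinomialRing.toIsAddTorsionFree (R := B)).nsmul_right_injective (n := n.factorial * n.factorial)
    (Nat.mul_ne_zero n.factorial_ne_zero n.factorial_ne_zero) ?_
  simp only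
  have hL : (n.factorial * n.factorial) • Ring.choose (r • x) n
      = n.factorial • (descPochhammer B n).eval (r * x) := by
    rw [smul_eq_mul, mul_smul, hNS n.factorial (Ring.choose (r*x) n), factorial_mul_ringChoose]
  rw [hL, master, Finset.smul_sum]
  refine Finset.sum_congr rfl fun k hk => ?_
  rw [mem_range] at hk
  have hdelta : (descPochhammer B k).eval r *
      ∑ j ∈ range (k+1), ((-1:ℤ)^(k-j) * (k.choose j)) •
        (descPochhammer B n).eval ((j:B)*x)
      = (k.factorial * n.factorial) •
        (Ring.choose r k * delta (fun y : B => Ring.choose y n) k x) := by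
    have h1 : (descPochhammer B k).eval r = k.factorial • Ring.choose r k := by
      rw [hNS, factorial_mul_ringChoose]
    have h2 : ∑ j ∈ range (k+1), ((-1:ℤ)^(k-j) * (k.choose j)) •
        (descPochhammer B n).eval ((j:B)*x)
        = n.factorial • delta (fun y : B => Ring.choose y n) k x := by
      rw [delta, Finset.smul_sum]
      refine Finset.sum_congr rfl fun j _ => ?_
      rw [smul_comm, hNS j x, hNS, factorial_mul_ringChoose]
    rw [h1, h2, smul_mul_smul_comm]
  rw [hdelta, smul_smul, ← mul_assoc,
    Nat.div_mul_cancel (Nat.factorial_dvd_factorial (by omega : k ≤ n)), smul_eq_mul]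

end Aux

/-- **The binomial coefficient `x ↦ (x choose n)` is numerical of degree ≤ n.** -/
theorem choose_isNumerical {B : Type*} [CommRing B] [BinomialRing B] (n : ℕ) :
    IsNumerical B (fun x : B => Ring.choose x n) n := by
  constructor
  · exact part1 n
  · exact part2 n
end

section
/- Let B be a binomial ring, r ∈ B, and m ≤ n natural numbers. Then ∑_{k=m}^{n} (−1)^k · Ring.choose r k · binom(k,m) = (−1)^n · Ring.choose r m · Ring.choose (r − m − 1) (n − m), where binom(k,m) denotes the ordinary natural-number binomial coefficient cast into B and r − m − 1 means r − (m : B) − 1. -/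
/-- **A binomial identity in binomial rings:** for `m ≤ n`,
`∑_{k=m}^{n} (-1)^k (r choose k) (k choose m) = (-1)^n (r choose m) ((r-m-1) choose (n-m))`. -/
theorem binomial_sum_formula {B : Type*} [CommRing B] [BinomialRing B]
    (r : B) (m n : ℕ) (hmn : m ≤ n) :
    ∑ k ∈ Finset.Icc m n, (-1 : B) ^ k * Ring.choose r k * (k.choose m : B) =
      (-1 : B) ^ n * Ring.choose r m * Ring.choose (r - (m : B) - 1) (n - m) := by
  induction n, hmn using Nat.le_induction with
  | base =>
    simp [Finset.Icc_self]
  | succ n hmn ih =>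
    rw [Finset.sum_Icc_succ_top (le_trans hmn (Nat.le_succ n)), ih]
    have h1 : Ring.choose r (n + 1) * ((n + 1).choose m : B) =
        Ring.choose r m * Ring.choose (r - (m : B)) (n + 1 - m) := by
      rw [← Ring.choose_smul_choose r (le_trans hmn (Nat.le_succ n) : m ≤ n + 1),
        nsmul_eq_mul, mul_comm]
    have h2 : Ring.choose (r - (m : B)) (n + 1 - m) =
        Ring.choose (r - (m : B) - 1) (n - m) + Ring.choose (r - (m : B) - 1) (n - m + 1) := by
      have : n + 1 - m = (n - m) + 1 := by omega
      rw [this, ← Ring.choose_succ_succ (r - (m : B) - 1) (n - m), sub_add_cancel]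
    have h3 : n + 1 - m = n - m + 1 := by omega
    rw [h3] at h1 h2 ⊢
    linear_combination (-1 : B) ^ (n + 1) * h1 +
      (-1 : B) ^ (n + 1) * Ring.choose r m * h2
end

section
/- Let B be a binomial ring, M, N B-modules, and let φ : M → N be a map whose deviation in n+1 variables vanishes (condition (i)). Then φ is numerical of degree ≤ n if and only if for all r ∈ B and x ∈ M: φ(r • x) = ∑_{m=0}^{n} (−1)^{n−m} · (Ring.choose r m · Ring.choose (r − m − 1) (n − m)) • φ(m • x), where r − m − 1 means r − (m : B) − 1. -/
lemma alt_sum_choose {B : Type*} [CommRing B] [BinomialRing B] (s : B) (t : ℕ) :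
    ∑ j ∈ Finset.range (t + 1), (-1 : B) ^ j * Ring.choose s j
      = (-1 : B) ^ t * Ring.choose (s - 1) t := by
  induction t with
  | zero => simp [Ring.choose_zero_right]
  | succ t ih =>
      rw [Finset.sum_range_succ, ih]
      have hs : s = (s - 1) + 1 := by ring
      rw [show Ring.choose s (t+1) = Ring.choose ((s-1)+1) (t+1) by rw [← hs],
        Ring.choose_succ_succ]
      ring

lemma key_sum {B : Type*} [CommRing B] [BinomialRing B] (r : B) (n m : ℕ) (h : m ≤ n) :
    ∑ k ∈ Finset.Icc m n, (Ring.choose r k * ((-1 : B) ^ (k - m) * (k.choose m : B)))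
      = (-1 : B) ^ (n - m) * (Ring.choose r m * Ring.choose (r - (m : B) - 1) (n - m)) := by
  have h1 : ∀ k ∈ Finset.Icc m n,
      Ring.choose r k * ((-1 : B) ^ (k - m) * (k.choose m : B))
        = (-1 : B) ^ (k - m) * (Ring.choose r m * Ring.choose (r - m) (k - m)) := by
    intro k hk
    rw [Finset.mem_Icc] at hk
    have h2 := Ring.choose_smul_choose r (n := k) (k := m) hk.1
    rw [nsmul_eq_mul] at h2
    linear_combination ((-1:B)^(k-m)) * h2
  rw [Finset.sum_congr rfl h1]
  have h4 : ∑ k ∈ Finset.Icc m n, (-1 : B) ^ (k - m) * (Ring.choose r m * Ring.choose (r - m) (k - m))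
      = ∑ j ∈ Finset.range (n - m + 1), (-1 : B) ^ j * (Ring.choose r m * Ring.choose (r - m) j) := by
    refine Finset.sum_nbij' (fun k => k - m) (fun j => j + m) ?_ ?_ ?_ ?_ ?_ <;>
      intro a ha <;>
      simp only [Finset.mem_Icc, Finset.mem_range] at * <;>
      first
        | omega
        | (rw [show a - m + m = a by omega])
        | (rw [show a + m - m = a by omega])
        | rfl
  rw [h4]
  have h3 : ∑ j ∈ Finset.range (n - m + 1),
      (-1 : B) ^ j * (Ring.choose r m * Ring.choose (r - m) j)
      = Ring.choose r m * ∑ j ∈ Finset.range (n - m + 1),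
        (-1 : B) ^ j * Ring.choose (r - m) j := by
    rw [Finset.mul_sum]; exact Finset.sum_congr rfl fun j _ => by ring
  rw [h3, alt_sum_choose (r - m) (n - m), show r - (m:B) - 1 = r - m - 1 by ring]
  ring

lemma expand_eq {B M N : Type*} [CommRing B] [BinomialRing B]
    [AddCommGroup M] [Module B M] [AddCommGroup N] [Module B N]
    (n : ℕ) (φ : M → N) (r : B) (x : M) :
    ∑ k ∈ Finset.range (n + 1), Ring.choose r k • delta φ k x
      = ∑ m ∈ Finset.range (n + 1),
          ((-1 : B) ^ (n - m) * (Ring.choose r m * Ring.choose (r - (m : B) - 1) (n - m))) •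
            φ (m • x) := by
  have step1 : ∀ k ∈ Finset.range (n + 1), Ring.choose r k • delta φ k x
      = ∑ j ∈ Finset.range (n + 1),
          (if j ≤ k then (Ring.choose r k * ((-1 : B) ^ (k - j) * (k.choose j : B))) • φ (j • x)
           else 0) := by
    intro k hk
    rw [Finset.mem_range] at hk
    rw [delta, Finset.smul_sum]
    rw [show (Finset.range (n+1)) = Finset.range (k+1) ∪ (Finset.range (n+1) \ Finset.range (k+1))
      from (Finset.union_sdiff_of_subset (by intro j hj; rw [Finset.mem_range] at *; omega)).symm,
      Finset.sum_union Finset.disjoint_sdiff]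
    have hz : ∑ j ∈ Finset.range (n+1) \ Finset.range (k+1),
        (if j ≤ k then (Ring.choose r k * ((-1 : B) ^ (k - j) * (k.choose j : B))) • φ (j • x)
         else 0) = 0 := by
      refine Finset.sum_eq_zero fun j hj => ?_
      rw [Finset.mem_sdiff, Finset.mem_range, Finset.mem_range] at hj
      rw [if_neg (by omega)]
    rw [hz, add_zero]
    refine Finset.sum_congr rfl fun j hj => ?_
    rw [Finset.mem_range] at hj
    rw [if_pos (by omega), ← Int.cast_smul_eq_zsmul B, smul_smul]
    push_cast
    ring_nf
  rw [Finset.sum_congr rfl step1, Finset.sum_comm]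
  refine Finset.sum_congr rfl fun j hj => ?_
  rw [Finset.mem_range] at hj
  rw [← Finset.sum_filter,
    show (Finset.range (n+1)).filter (j ≤ ·) = Finset.Icc j n by
      ext k; simp only [Finset.mem_filter, Finset.mem_range, Finset.mem_Icc]; omega,
    ← Finset.sum_smul, key_sum r n j (by omega)]

/-- **Alternative characterisation of numericality.** A map which is polynomial of
degree ≤ n (vanishing (n+1)-variable deviation) is numerical of degree ≤ n if and
only if `φ(r • x) = ∑_{m=0}^{n} (-1)^{n-m} (r choose m)((r-m-1) choose (n-m)) • φ(m • x)`. -/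
theorem isNumerical_iff_of_deviation_vanishes {B M N : Type*} [CommRing B] [BinomialRing B]
    [AddCommGroup M] [Module B M] [AddCommGroup N] [Module B N]
    (n : ℕ) (φ : M → N)
    (hdev : ∀ x : Fin (n + 1) → M,
      ∑ S : Finset (Fin (n + 1)), ((-1 : ℤ) ^ (n + 1 - S.card)) • φ (∑ i ∈ S, x i) = 0) :
    IsNumerical B φ n ↔
      ∀ (r : B) (x : M),
        φ (r • x) = ∑ m ∈ Finset.range (n + 1),
          ((-1 : B) ^ (n - m) * (Ring.choose r m * Ring.choose (r - (m : B) - 1) (n - m))) •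
            φ (m • x) := by
  constructor
  · intro h r x
    rw [h.2 r x, expand_eq]
  · intro h
    refine ⟨hdev, fun r x => ?_⟩
    rw [h r x, ← expand_eq]
end

section
/- Let B be a binomial ring, N a B-module, k, n ∈ ℕ, and let v : (Fin k → ℕ) → N be a family with v q = 0 whenever |q| > n. If ∑_{q : Fin k → ℕ, |q| ≤ n} (∏_i Ring.choose (a i) (q i)) • v q = 0 for every a : Fin k → B, then v q = 0 for all q. (Uniqueness of coefficients in binomial expansions.) -/
/-- The finite set of multi-indices `q : Fin k → ℕ` with `|q| ≤ n`. -/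
def multiIdx (k n : ℕ) : Finset (Fin k → ℕ) :=
  (Finset.Iic fun _ : Fin k => n).filter fun q => ∑ i, q i ≤ n

/-- **Uniqueness of coefficients in binomial expansions.** If `v q = 0` for `|q| > n`
and `∑_{|q| ≤ n} (∏ᵢ ((a i) choose (q i))) • v q = 0` for every `a : Fin k → B`, then
`v = 0`. -/
theorem binomial_expansion_coeffs_unique {B N : Type*} [CommRing B] [BinomialRing B]
    [AddCommGroup N] [Module B N] (k n : ℕ) (v : (Fin k → ℕ) → N)
    (hv : ∀ q : Fin k → ℕ, n < ∑ i, q i → v q = 0)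
    (h : ∀ a : Fin k → B,
      ∑ q ∈ multiIdx k n, (∏ i, Ring.choose (a i) (q i)) • v q = 0) :
    ∀ q : Fin k → ℕ, v q = 0 := by
  suffices H : ∀ m, ∀ q : Fin k → ℕ, ∑ i, q i = m → v q = 0 by
    intro q; exact H _ q rfl
  intro m
  induction m using Nat.strong_induction_on with
  | _ m ih =>
    intro q hq
    by_cases hn : n < ∑ i, q i
    · exact hv q hn
    push_neg at hn
    have hmem : q ∈ multiIdx k n := by
      simp only [multiIdx, Finset.mem_filter, Finset.mem_Iic]
      refine ⟨fun i => ?_, hn⟩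
      exact le_trans (Finset.single_le_sum (fun i _ => Nat.zero_le (q i))
        (Finset.mem_univ i)) hn
    have key := h (fun i => (q i : B))
    rw [Finset.sum_eq_single q] at key
    · simpa [Ring.choose_natCast] using key
    · intro q' hq' hne
      by_cases hle : ∀ i, q' i ≤ q i
      · have hlt : ∑ i, q' i < ∑ i, q i := by
          obtain ⟨i, hi⟩ : ∃ i, q' i ≠ q i := Function.ne_iff.mp hne
          exact Finset.sum_lt_sum (fun i _ => hle i)
            ⟨i, Finset.mem_univ i, lt_of_le_of_ne (hle i) hi⟩
        rw [ih _ (hq ▸ hlt) q' rfl, smul_zero]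
      · push_neg at hle
        obtain ⟨i, hi⟩ := hle
        have : Ring.choose ((q i : ℕ) : B) (q' i) = 0 := by
          rw [Ring.choose_natCast, Nat.choose_eq_zero_of_lt hi, Nat.cast_zero]
        rw [Finset.prod_eq_zero (Finset.mem_univ i) this, zero_smul]
    · intro habs; exact absurd hmem habs
end

section
/- Let B be a binomial ring and M, N B-modules. A map φ : M → N is numerical of degree ≤ 1 if and only if it is a translated module homomorphism, i.e. there exists a B-linear map ψ : M →ₗ[B] N such that φ(x) = ψ(x) + φ(0) for all x ∈ M. -/
lemma sum_finset_fin_two' {N : Type*} [AddCommMonoid N] (f : Finset (Fin 2) → N) :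
    ∑ S : Finset (Fin 2), f S = f ∅ + f {0} + f {1} + f {0, 1} := by
  have h : (Finset.univ : Finset (Finset (Fin 2))) = {∅, {0}, {1}, {0, 1}} := by decide
  rw [h, Finset.sum_insert (by decide), Finset.sum_insert (by decide),
    Finset.sum_insert (by decide), Finset.sum_singleton]
  simp [add_assoc]

lemma delta_zero' {M N : Type*} [AddCommMonoid M] [AddCommGroup N] (φ : M → N) (x : M) :
    delta φ 0 x = φ 0 := by simp [delta]

lemma delta_one' {M N : Type*} [AddCommMonoid M] [AddCommGroup N] (φ : M → N) (x : M) :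
    delta φ 1 x = φ x - φ 0 := by
  simp [delta, Finset.sum_range_succ]
  abel

/-- **A map is numerical of degree ≤ 1 iff it is a translated module homomorphism.** -/
theorem isNumerical_one_iff_translated_hom {B M N : Type*} [CommRing B] [BinomialRing B]
    [AddCommGroup M] [Module B M] [AddCommGroup N] [Module B N] (φ : M → N) :
    IsNumerical B φ 1 ↔ ∃ ψ : M →ₗ[B] N, ∀ x : M, φ x = ψ x + φ 0 := by
  constructor
  · rintro ⟨h1, h2⟩
    have hadd : ∀ a b : M, φ (a + b) = φ a + φ b - φ 0 := by
      intro a b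
      have h := h1 ![a, b]
      rw [sum_finset_fin_two'] at h
      simp [Finset.sum_pair (by decide : (0 : Fin 2) ≠ 1)] at h
      have e : φ (a + b) - (φ a + φ b - φ 0) = φ 0 + -φ a + -φ b + φ (a + b) := by
        abel
      rw [← sub_eq_zero, e, h]
    have hsmul : ∀ (r : B) (x : M), φ (r • x) = φ 0 + r • (φ x - φ 0) := by
      intro r x
      have h := h2 r x
      simpa [Finset.sum_range_succ, delta_zero', delta_one'] using h
    refine ⟨{ toFun := fun x => φ x - φ 0
              map_add' := by
                intro a b
                show φ (a + b) - φ 0 = (φ a - φ 0) + (φ b - φ 0)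
                rw [hadd]; abel
              map_smul' := by
                intro r x
                show φ (r • x) - φ 0 = r • (φ x - φ 0)
                rw [hsmul]; abel }, ?_⟩
    intro x
    simp
  · rintro ⟨ψ, hψ⟩
    constructor
    · intro x
      rw [sum_finset_fin_two']
      have hc : ({0, 1} : Finset (Fin 2)).card = 2 := by decide
      simp only [Finset.sum_empty, Finset.sum_singleton,
        Finset.sum_pair (by decide : (0 : Fin 2) ≠ 1), Finset.card_empty,
        Finset.card_singleton, hc]
      norm_num
      rw [hψ (x 0 + x 1), hψ (x 0), hψ (x 1), hψ 0, map_add]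
      abel
    · intro r x
      simp only [Finset.sum_range_succ, Finset.sum_range_zero, delta_zero', delta_one',
        Ring.choose_zero_right, Ring.choose_one_right, one_smul, zero_add]
      rw [hψ (r • x), hψ x, map_smul]
      have : ψ x + φ 0 - φ 0 = ψ x := by abel
      rw [this]
      abel
end

section
/- Let M and N be abelian groups (ℤ-modules) and let φ : M → N be a map whose deviation in n+1 variables vanishes: for all x : Fin (n+1) → M, ∑_{S ⊆ Fin (n+1)} (−1)^{n+1−|S|} • φ(∑_{i∈S} x i) = 0. Then φ automatically satisfies the scalar condition: for all r ∈ ℤ and x ∈ M, φ(r • x) = ∑_{k=0}^{n} Ring.choose r k • Δ_k φ x, where Ring.choose r k is the integer binomial coefficient. In other words, over ℤ every polynomial map of degree ≤ n is numerical of degree ≤ n. -/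
open Finset fwdDiff

/-- Sum over the powerset of a set of card `n` of a function of the card. -/
lemma sum_powerset_card {N : Type*} [AddCommGroup N] {α : Type*} [DecidableEq α]
    (s : Finset α) (H : ℕ → N) :
    ∑ T ∈ s.powerset, H T.card = ∑ j ∈ Finset.range (s.card + 1), (s.card.choose j) • H j := by
  rw [Finset.sum_powerset]
  refine Finset.sum_congr rfl fun j hj => ?_
  rw [Finset.sum_congr rfl (fun T hT => by rw [(Finset.mem_powersetCard.1 hT).2]),
    Finset.sum_const, Finset.card_powersetCard]

/-- Newton's formula over ℤ with `Ring.choose`. -/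
lemma newton_int {N : Type*} [AddCommGroup N] (n : ℕ) (f : ℤ → N)
    (hf : ∀ m : ℤ, (fwdDiff (1 : ℤ))^[n + 1] f m = 0) (r : ℤ) :
    f r = ∑ k ∈ Finset.range (n + 1), Ring.choose r k • (fwdDiff (1 : ℤ))^[k] f 0 := by
  induction n generalizing f r with
  | zero =>
    have h1 : ∀ m : ℤ, f (m + 1) = f m := by
      intro m
      have := hf m
      simp only [zero_add, Function.iterate_one, fwdDiff] at this
      exact sub_eq_zero.mp this
    have hconst : ∀ m : ℤ, f m = f 0 := by
      intro m
      induction m using Int.induction_on with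
      | zero => rfl
      | succ k ih => rw [h1, ih]
      | pred k ih =>
        have := h1 (-(k : ℤ) - 1)
        rw [show -(k : ℤ) - 1 + 1 = -k by ring] at this
        rw [← this]; exact ih
    simp [hconst r, Ring.choose_zero_right]
  | succ n IH =>
    have hf' : ∀ m : ℤ, (fwdDiff (1 : ℤ))^[n + 1] ((fwdDiff (1 : ℤ)) f) m = 0 := fun m => by
      rw [← Function.iterate_succ_apply]; exact hf m
    have IHd : ∀ s : ℤ, (fwdDiff (1 : ℤ)) f s
        = ∑ k ∈ Finset.range (n + 1), Ring.choose s k • (fwdDiff (1 : ℤ))^[k + 1] f 0 := by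
      intro s
      rw [IH ((fwdDiff (1 : ℤ)) f) hf' s]
      exact Finset.sum_congr rfl fun k _ => by rw [Function.iterate_succ_apply]
    have key : ∀ s : ℤ,
        ∑ k ∈ Finset.range (n + 2), Ring.choose (s + 1) k • (fwdDiff (1 : ℤ))^[k] f 0
        = ∑ k ∈ Finset.range (n + 2), Ring.choose s k • (fwdDiff (1 : ℤ))^[k] f 0
          + ∑ k ∈ Finset.range (n + 1), Ring.choose s k • (fwdDiff (1 : ℤ))^[k + 1] f 0 := by
      intro s
      rw [Finset.sum_range_succ' _ (n + 1), Finset.sum_range_succ' _ (n + 1)]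
      simp only [Ring.choose_succ_succ, Ring.choose_zero_right, add_smul]
      rw [Finset.sum_add_distrib]
      abel
    have hstep : ∀ s : ℤ, f (s + 1) = f s + (fwdDiff (1 : ℤ)) f s := by
      intro s; rw [fwdDiff]; abel
    induction r using Int.induction_on with
    | zero =>
      rw [Finset.sum_eq_single_of_mem 0 (Finset.mem_range.2 (Nat.succ_pos _))]
      · simp [Ring.choose_zero_right]
      · intro k _ hk
        obtain ⟨j, rfl⟩ := Nat.exists_eq_succ_of_ne_zero hk
        rw [Ring.choose_zero_succ, zero_smul]
    | succ k ih =>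
      rw [hstep, ih, IHd, key]
    | pred k ih =>
      have h1 : f (-(k : ℤ)) = f (-(k : ℤ) - 1) + (fwdDiff (1 : ℤ)) f (-(k : ℤ) - 1) := by
        have := hstep (-(k : ℤ) - 1)
        rwa [show -(k : ℤ) - 1 + 1 = -k by ring] at this
      have h2 := key (-(k : ℤ) - 1)
      rw [show -(k : ℤ) - 1 + 1 = -k by ring] at h2
      rw [ih, h2, IHd (-(k : ℤ) - 1)] at h1
      exact (add_right_cancel h1.symm)

/-- **Over ℤ, polynomial maps are automatically numerical.** If the deviation of
`φ : M → N` in `n + 1` variables vanishes, then the scalar condition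
`φ(r • x) = ∑_{k=0}^{n} (r choose k) • Δ_k φ x` holds for all `r : ℤ`. -/
theorem polynomial_int_is_numerical {M N : Type*} [AddCommGroup M] [AddCommGroup N]
    (n : ℕ) (φ : M → N)
    (hdev : ∀ x : Fin (n + 1) → M,
      ∑ S : Finset (Fin (n + 1)), ((-1 : ℤ) ^ (n + 1 - S.card)) • φ (∑ i ∈ S, x i) = 0) :
    ∀ (r : ℤ) (x : M),
      φ (r • x) = ∑ k ∈ Finset.range (n + 1), Ring.choose r k • delta φ k x := by
  intro r x
  set f : ℤ → N := fun t => φ (t • x) with hfdef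
  -- the n-th forward difference of f is constant
  have hconst : ∀ m : ℤ, (fwdDiff (1 : ℤ))^[n] f m = (fwdDiff (1 : ℤ))^[n] f 0 := by
    intro m
    classical
    set s₀ : Finset (Fin (n + 1)) := Finset.univ.erase 0 with hs₀
    have hcard : s₀.card = n := by
      rw [hs₀, Finset.card_erase_of_mem (Finset.mem_univ 0), Finset.card_univ,
        Fintype.card_fin, Nat.add_sub_cancel]
    have h0 := hdev (fun i => if i = 0 then m • x else x)
    rw [show (Finset.univ : Finset (Finset (Fin (n + 1)))) =
        (Finset.univ : Finset (Fin (n + 1))).powerset from (Finset.powerset_univ).symm,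
      show (Finset.univ : Finset (Fin (n + 1))) = insert 0 s₀ from
        (Finset.insert_erase (Finset.mem_univ 0)).symm,
      Finset.sum_powerset_insert (Finset.notMem_erase 0 _)] at h0
    -- simplify the two sums
    have e1 : ∑ T ∈ s₀.powerset, ((-1 : ℤ) ^ (n + 1 - T.card))
          • φ (∑ i ∈ T, (if i = 0 then m • x else x))
        = ∑ T ∈ s₀.powerset, ((-1 : ℤ) ^ (n + 1 - T.card)) • φ (T.card • x) := by
      refine Finset.sum_congr rfl fun T hT => ?_
      have h0T : (0 : Fin (n + 1)) ∉ T := fun h =>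
        Finset.notMem_erase 0 _ (Finset.mem_powerset.1 hT h)
      congr 1
      rw [Finset.sum_congr rfl fun i hi => if_neg (fun h : i = 0 => h0T (h ▸ hi)),
        Finset.sum_const]
    have e2 : ∑ T ∈ s₀.powerset, ((-1 : ℤ) ^ (n + 1 - (insert 0 T).card))
          • φ (∑ i ∈ insert 0 T, (if i = 0 then m • x else x))
        = ∑ T ∈ s₀.powerset, ((-1 : ℤ) ^ (n - T.card)) • φ ((m + T.card) • x) := by
      refine Finset.sum_congr rfl fun T hT => ?_
      have h0T : (0 : Fin (n + 1)) ∉ T := fun h =>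
        Finset.notMem_erase 0 _ (Finset.mem_powerset.1 hT h)
      rw [Finset.card_insert_of_notMem h0T,
        Finset.sum_insert h0T, if_pos rfl,
        Finset.sum_congr rfl fun i hi => if_neg (fun h : i = 0 => h0T (h ▸ hi)),
        Finset.sum_const, Nat.succ_sub_succ, add_smul, natCast_zsmul]
    rw [e1, e2,
      sum_powerset_card s₀ (fun j => ((-1 : ℤ) ^ (n + 1 - j)) • φ (j • x)),
      sum_powerset_card s₀ (fun j => ((-1 : ℤ) ^ (n - j)) • φ ((m + j) • x)), hcard] at h0
    -- now express both fwdDiffs by fwdDiff_iter_eq_sum_shift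
    have hd : ∀ s : ℤ, (fwdDiff (1 : ℤ))^[n] f s
        = ∑ k ∈ Finset.range (n + 1), (n.choose k) • (((-1 : ℤ) ^ (n - k)) • φ ((s + k) • x)) := by
      intro s
      rw [fwdDiff_iter_eq_sum_shift]
      refine Finset.sum_congr rfl fun k _ => ?_
      rw [mul_comm, mul_smul, natCast_zsmul]
      congr 2
      rw [hfdef]
      simp
    have hneg : ∑ k ∈ Finset.range (n + 1),
          (n.choose k) • (((-1 : ℤ) ^ (n + 1 - k)) • φ (k • x))
        = - ∑ k ∈ Finset.range (n + 1), (n.choose k) • (((-1 : ℤ) ^ (n - k)) • φ (((0 : ℤ) + k) • x)) := by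
      rw [← Finset.sum_neg_distrib]
      refine Finset.sum_congr rfl fun k hk => ?_
      have hk' : k ≤ n := Nat.lt_succ_iff.mp (Finset.mem_range.1 hk)
      rw [show n + 1 - k = (n - k) + 1 by omega, pow_succ, mul_comm, neg_one_mul, neg_smul,
        smul_neg, zero_add]
      norm_cast
    rw [hd m, hd 0]
    exact neg_injective ((eq_neg_of_add_eq_zero_left h0).symm.trans hneg)
  have hvanish : ∀ m : ℤ, (fwdDiff (1 : ℤ))^[n + 1] f m = 0 := by
    intro m
    rw [Function.iterate_succ_apply', fwdDiff, hconst (m + 1), hconst m, sub_self]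
  have := newton_int n f hvanish r
  rw [hfdef] at this
  simp only at this
  rw [this]
  refine Finset.sum_congr rfl fun k _ => ?_
  congr 1
  rw [fwdDiff_iter_eq_sum_shift, delta]
  refine Finset.sum_congr rfl fun j _ => ?_
  congr 1
  simp [natCast_zsmul]
end

section
/- A map φ : ℤ → ℤ is numerical of degree ≤ n if and only if there exist integers c_0, …, c_n such that φ(x) = ∑_{k=0}^{n} c_k · Ring.choose x k for all x ∈ ℤ, where Ring.choose x k is the integer binomial coefficient. -/
open Finset fwdDiff

/-- `φ` is an integer combination of binomial coefficients `choose · k` for `k < n`. -/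
def MyDeg (n : ℕ) (φ : ℤ → ℤ) : Prop :=
  ∃ c : ℕ → ℤ, ∀ t : ℤ, φ t = ∑ k ∈ Finset.range n, c k * Ring.choose t k

lemma myDeg_zero {φ : ℤ → ℤ} (h : MyDeg 0 φ) : ∀ t, φ t = 0 := by
  obtain ⟨c, hc⟩ := h
  simpa using hc

lemma myDeg_fwdDiff {n : ℕ} {φ : ℤ → ℤ} (h : MyDeg (n + 1) φ) (y : ℤ) :
    MyDeg n (Δ_[y] φ) := by
  obtain ⟨c, hc⟩ := h
  refine ⟨fun i => ∑ k ∈ Finset.Ico (i + 1) (n + 1), c k * Ring.choose y (k - i), fun t => ?_⟩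
  have key : ∀ k : ℕ, Ring.choose (t + y) k - Ring.choose t k
      = ∑ i ∈ Finset.range k, Ring.choose t i * Ring.choose y (k - i) := by
    intro k
    rw [Ring.add_choose_eq k (Commute.all t y),
      Finset.Nat.sum_antidiagonal_eq_sum_range_succ_mk, Finset.sum_range_succ]
    simp [Ring.choose_zero_right]
  have : Δ_[y] φ t = ∑ k ∈ Finset.range (n + 1), ∑ i ∈ Finset.range k,
      c k * Ring.choose y (k - i) * Ring.choose t i := by
    simp only [fwdDiff, hc, ← Finset.sum_sub_distrib, ← mul_sub, key, Finset.mul_sum]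
    refine Finset.sum_congr rfl fun k _ => Finset.sum_congr rfl fun i _ => by ring
  rw [this, Finset.sum_comm' (t' := Finset.range n)
      (s' := fun i => Finset.Ico (i + 1) (n + 1)) (by
        intro k i
        simp only [Finset.mem_range, Finset.mem_Ico]
        omega)]
  refine Finset.sum_congr rfl fun i _ => ?_
  rw [Finset.sum_mul]

lemma myDeg_sum_powerset {ι : Type*} [DecidableEq ι] (n : ℕ) :
    ∀ (φ : ℤ → ℤ), MyDeg n φ → ∀ (s : Finset ι) (x : ι → ℤ), n ≤ s.card →
      ∑ S ∈ s.powerset, ((-1 : ℤ) ^ (s.card - S.card)) • φ (∑ i ∈ S, x i) = 0 := by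
  induction n with
  | zero =>
    intro φ hφ s x _
    simp [myDeg_zero hφ]
  | succ n IH =>
    intro φ hφ s x hcard
    obtain ⟨a, t, hat, rfl⟩ : ∃ a t, a ∉ t ∧ s = insert a t := by
      obtain ⟨a, ha⟩ := Finset.card_pos.mp (Nat.lt_of_lt_of_le n.succ_pos hcard)
      exact ⟨a, s.erase a, Finset.notMem_erase a s, (Finset.insert_erase ha).symm⟩
    rw [Finset.sum_powerset_insert hat]
    have hct : (insert a t).card = t.card + 1 := Finset.card_insert_of_notMem hat
    have step : ∀ S ∈ t.powerset,
        ((-1 : ℤ) ^ ((insert a t).card - S.card)) • φ (∑ i ∈ S, x i)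
          + ((-1 : ℤ) ^ ((insert a t).card - (insert a S).card)) • φ (∑ i ∈ insert a S, x i)
        = ((-1 : ℤ) ^ (t.card - S.card)) • (Δ_[x a] φ) (∑ i ∈ S, x i) := by
      intro S hS
      rw [Finset.mem_powerset] at hS
      have haS : a ∉ S := fun h => hat (hS h)
      have hSc : S.card ≤ t.card := Finset.card_le_card hS
      rw [Finset.sum_insert haS, Finset.card_insert_of_notMem haS, hct]
      have e1 : t.card + 1 - S.card = (t.card - S.card) + 1 := by omega
      have e2 : t.card + 1 - (S.card + 1) = t.card - S.card := by omega
      rw [e1, e2, pow_succ]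
      have : x a + ∑ i ∈ S, x i = (∑ i ∈ S, x i) + x a := by ring
      rw [this]
      simp only [fwdDiff, smul_sub, smul_eq_mul]
      ring
    rw [← Finset.sum_add_distrib, Finset.sum_congr rfl step]
    exact IH _ (myDeg_fwdDiff hφ (x a)) t x (by omega)

lemma ring_choose_pascal_sub (r : ℤ) (k : ℕ) :
    Ring.choose (r + 1) (k + 1) - Ring.choose r (k + 1) = Ring.choose r k := by
  rw [Ring.choose_succ_succ]; ring

/-- The Newton expansion identity for integer combinations of binomial coefficients. -/
lemma myDeg_newton (n : ℕ) :
    ∀ (φ : ℤ → ℤ), MyDeg (n + 1) φ → ∀ (x r : ℤ),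
      φ (r * x) = ∑ k ∈ Finset.range (n + 1), Ring.choose r k • ((fwdDiff x)^[k] φ 0) := by
  induction n with
  | zero =>
    intro φ ⟨c, hc⟩ x r
    have hconst : ∀ t, φ t = c 0 := by
      intro t; rw [hc]; simp [Ring.choose_zero_right]
    simp [hconst, Ring.choose_zero_right]
  | succ n IH =>
    intro φ hφ x r
    have hd : MyDeg (n + 1) (Δ_[x] φ) := myDeg_fwdDiff hφ x
    have hN : ∀ r : ℤ, (Δ_[x] φ) (r * x)
        = ∑ k ∈ Finset.range (n + 1), Ring.choose r k • ((fwdDiff x)^[k + 1] φ 0) := by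
      intro r
      rw [IH _ hd x r]
      exact Finset.sum_congr rfl fun k _ => by rw [Function.iterate_succ_apply]
    -- the difference of the right-hand side
    have hA : ∀ r : ℤ,
        (∑ k ∈ Finset.range (n + 2), Ring.choose (r + 1) k • ((fwdDiff x)^[k] φ 0))
          - (∑ k ∈ Finset.range (n + 2), Ring.choose r k • ((fwdDiff x)^[k] φ 0))
        = ∑ k ∈ Finset.range (n + 1), Ring.choose r k • ((fwdDiff x)^[k + 1] φ 0) := by
      intro r
      rw [← Finset.sum_sub_distrib]
      have : ∀ k ∈ Finset.range (n + 2),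
          Ring.choose (r + 1) k • ((fwdDiff x)^[k] φ 0) - Ring.choose r k • ((fwdDiff x)^[k] φ 0)
          = (Ring.choose (r + 1) k - Ring.choose r k) • ((fwdDiff x)^[k] φ 0) := by
        intro k _; rw [sub_smul]
      rw [Finset.sum_congr rfl this, Finset.sum_range_succ']
      simp only [Ring.choose_zero_right, sub_self, zero_smul, add_zero,
        ring_choose_pascal_sub]
    have hB : ∀ r : ℤ, (Δ_[x] φ) (r * x) = φ ((r + 1) * x) - φ (r * x) := by
      intro r
      have : r * x + x = (r + 1) * x := by ring
      rw [fwdDiff, this]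
    induction r using Int.induction_on with
    | zero =>
      have hz' : ∀ k ∈ Finset.range (n + 2),
          Ring.choose (0 : ℤ) k • ((fwdDiff x)^[k] φ 0)
            = if k = 0 then φ 0 else 0 := by
        intro k _
        rw [Ring.choose_zero_ite]
        split <;> simp_all
      rw [zero_mul, Finset.sum_congr rfl hz']
      simp
    | succ r ih =>
      have h1 := hN r
      rw [hB r, ih] at h1
      have h2 := hA (r : ℤ)
      linarith
    | pred r ih =>
      have h1 := hN (-r - 1)
      rw [hB (-r - 1)] at h1
      have h2 := hA (-r - 1)
      have e : (-r - 1 : ℤ) + 1 = -r := by ring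
      rw [e] at h1 h2
      rw [ih] at h1
      linarith
    
lemma delta_eq_fwdDiff_iter (φ : ℤ → ℤ) (k : ℕ) (x : ℤ) :
    delta φ k x = (fwdDiff x)^[k] φ 0 := by
  rw [fwdDiff_iter_eq_sum_shift, delta]
  refine Finset.sum_congr rfl fun j _ => ?_
  rw [zero_add]

/-- **Numerical maps ℤ → ℤ are precisely the numerical polynomials:**
`φ : ℤ → ℤ` is numerical of degree ≤ n iff `φ(x) = ∑_{k=0}^{n} c_k (x choose k)`
for some integers `c_0, …, c_n`. -/
theorem isNumerical_int_iff_numerical_polynomial (n : ℕ) (φ : ℤ → ℤ) :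
    IsNumerical ℤ φ n ↔
      ∃ c : Fin (n + 1) → ℤ,
        ∀ x : ℤ, φ x = ∑ k : Fin (n + 1), c k * Ring.choose x (k : ℕ) := by
  constructor
  · rintro ⟨-, h2⟩
    refine ⟨fun k => delta φ k 1, fun x => ?_⟩
    have := h2 x 1
    rw [smul_eq_mul, mul_one] at this
    rw [this, ← Fin.sum_univ_eq_sum_range (fun k => Ring.choose x k • delta φ k 1) (n + 1)]
    exact Finset.sum_congr rfl fun k _ => by rw [smul_eq_mul, mul_comm]
  · rintro ⟨c, hc⟩
    have hdeg : MyDeg (n + 1) φ := by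
      refine ⟨fun j => if h : j < n + 1 then c ⟨j, h⟩ else 0, fun t => ?_⟩
      rw [hc t, ← Fin.sum_univ_eq_sum_range
        (fun j => (if h : j < n + 1 then c ⟨j, h⟩ else 0) * Ring.choose t j) (n + 1)]
      exact Finset.sum_congr rfl fun k _ => by rw [dif_pos k.isLt]
    constructor
    · intro x
      have := myDeg_sum_powerset (n + 1) φ hdeg (Finset.univ : Finset (Fin (n + 1))) x
        (by simp)
      rw [Finset.powerset_univ] at this
      simpa using this
    · intro r x
      rw [smul_eq_mul, myDeg_newton n φ hdeg x r]
      exact Finset.sum_congr rfl fun k _ => by rw [delta_eq_fwdDiff_iter]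
end

section
/- Let B be a binomial ring, M, N B-modules, and φ : M → N a map. Suppose φ admits polynomial (monomial) expansions of degree ≤ n: for every k ∈ ℕ and every u : Fin k → M there exists a family w : (Fin k → ℕ) → N with w q = 0 whenever |q| > n, such that φ(∑_i (a i) • (u i)) = ∑_{q, |q| ≤ n} (∏_i (a i)^{q i}) • w q for all a : Fin k → B. Then φ is numerical of degree ≤ n. (Every strict polynomial map of degree ≤ n is numerical of degree ≤ n.) -/
open Finset Polynomial



/-- Binomial inversion at natural points. -/
lemma newton_inv (f : ℕ → ℤ) (n r : ℕ) (hr : r ≤ n) :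
    ∑ k ∈ range (n + 1), (r.choose k : ℤ) *
      ∑ j ∈ range (k + 1), (-1) ^ (k - j) * (k.choose j : ℤ) * f j = f r := by
  have step1 : ∀ k ∈ range (n + 1),
      (r.choose k : ℤ) * ∑ j ∈ range (k + 1), (-1) ^ (k - j) * (k.choose j : ℤ) * f j
        = ∑ j ∈ range (n + 1), (r.choose k : ℤ) * ((-1) ^ (k - j) * (k.choose j : ℤ) * f j) := by
    intro k hk
    rw [mul_sum]
    apply Finset.sum_subset
    · intro j hj; simp only [mem_range] at *; omega
    · intro j _ hj2
      simp only [mem_range, not_lt] at hj2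
      have : k.choose j = 0 := Nat.choose_eq_zero_of_lt (by omega)
      simp [this]
  rw [Finset.sum_congr rfl step1, Finset.sum_comm]
  have inner : ∀ j ∈ range (n + 1),
      (∑ k ∈ range (n + 1), (r.choose k : ℤ) * ((-1) ^ (k - j) * (k.choose j : ℤ) * f j))
        = (if j = r then (1 : ℤ) else 0) * f j := by
    intro j _
    rcases le_or_gt j r with hjr | hjr
    · have hshrink : ∑ k ∈ range (n + 1),
          (r.choose k : ℤ) * ((-1) ^ (k - j) * (k.choose j : ℤ) * f j)
          = ∑ k ∈ Icc j r, (r.choose k : ℤ) * ((-1) ^ (k - j) * (k.choose j : ℤ) * f j) := by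
        apply (Finset.sum_subset ?_ ?_).symm
        · intro k hk; simp only [mem_Icc, mem_range] at *; omega
        · intro k hk1 hk2
          simp only [mem_range] at hk1
          simp only [mem_Icc, not_and, not_le] at hk2
          rcases le_or_gt k r with h1 | h1
          · have : k.choose j = 0 := Nat.choose_eq_zero_of_lt (by omega)
            simp [this]
          · have : r.choose k = 0 := Nat.choose_eq_zero_of_lt h1
            simp [this]
      rw [hshrink, ← Finset.Ico_add_one_right_eq_Icc, Finset.sum_Ico_eq_sum_range]
      have hterm : ∀ t ∈ range (r + 1 - j),
          (r.choose (j + t) : ℤ) * ((-1) ^ (j + t - j) * ((j + t).choose j : ℤ) * f j)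
          = ((r.choose j : ℤ) * f j) * ((-1) ^ t * ((r - j).choose t : ℤ)) := by
        intro t ht
        simp only [mem_range] at ht
        have h1 : j + t ≤ r := by omega
        have h2 : j ≤ j + t := Nat.le_add_right _ _
        have hc : (r.choose (j + t)) * ((j + t).choose j) = r.choose j * (r - j).choose t := by
          have := Nat.choose_mul (n := r) h2
          simpa using this
        have : j + t - j = t := by omega
        rw [this]
        have hc' : ((r.choose (j + t) : ℤ)) * ((j + t).choose j : ℤ)
            = (r.choose j : ℤ) * ((r - j).choose t : ℤ) := by exact_mod_cast hc
        linear_combination ((-1 : ℤ) ^ t * f j) * hc'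
      rw [Finset.sum_congr rfl hterm, ← Finset.mul_sum]
      have hrange : r + 1 - j = (r - j) + 1 := by omega
      rw [hrange, Int.alternating_sum_range_choose]
      rcases eq_or_lt_of_le hjr with heq | hlt
      · simp [heq]
      · have h1 : r - j ≠ 0 := by omega
        have h2 : j ≠ r := by omega
        simp [h1, h2]
    · have hall : ∀ k ∈ range (n + 1),
          (r.choose k : ℤ) * ((-1) ^ (k - j) * (k.choose j : ℤ) * f j) = 0 := by
        intro k _
        rcases le_or_gt k r with h1 | h1
        · have : k.choose j = 0 := Nat.choose_eq_zero_of_lt (by omega)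
          simp [this]
        · have : r.choose k = 0 := Nat.choose_eq_zero_of_lt h1
          simp [this]
      rw [Finset.sum_eq_zero hall]
      have : j ≠ r := by omega
      simp [this]
  rw [Finset.sum_congr rfl inner, Finset.sum_eq_single r]
  · simp
  · intro b _ hb; simp [hb]
  · intro hb; exact absurd (Finset.mem_range.mpr (by omega)) hb

lemma key_poly (n m : ℕ) (hm : m ≤ n) :
    ((n.factorial : ℤ)) • (X ^ m : ℤ[X]) =
      ∑ k ∈ range (n + 1),
        (((n.factorial / k.factorial : ℕ) : ℤ) *
          ∑ j ∈ range (k + 1), (-1) ^ (k - j) * (k.choose j : ℤ) * (j : ℤ) ^ m) •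
            descPochhammer ℤ k := by
  apply Polynomial.eq_of_degrees_lt_of_eval_finset_eq ((range (n + 1)).image (Nat.cast : ℕ → ℤ))
  · have hcard : #((range (n + 1)).image (Nat.cast : ℕ → ℤ)) = n + 1 := by
      rw [Finset.card_image_of_injective _ Nat.cast_injective, Finset.card_range]
    rw [hcard]
    calc degree _ ≤ degree (X ^ m : ℤ[X]) := degree_smul_le _ _
      _ = (m : WithBot ℕ) := degree_X_pow m
      _ < ((n + 1 : ℕ) : WithBot ℕ) := by exact_mod_cast Nat.lt_succ_of_le hm
  · have hcard : #((range (n + 1)).image (Nat.cast : ℕ → ℤ)) = n + 1 := by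
      rw [Finset.card_image_of_injective _ Nat.cast_injective, Finset.card_range]
    rw [hcard]
    apply lt_of_le_of_lt (Polynomial.degree_sum_le _ _)
    rw [Finset.sup_lt_iff (by exact_mod_cast WithBot.bot_lt_coe (n + 1))]
    intro k hk
    simp only [mem_range] at hk
    calc degree _ ≤ degree (descPochhammer ℤ k) := degree_smul_le _ _
      _ = (k : WithBot ℕ) := by
          rw [Polynomial.degree_eq_natDegree (monic_descPochhammer ℤ k).ne_zero,
            descPochhammer_natDegree]
      _ < ((n + 1 : ℕ) : WithBot ℕ) := by exact_mod_cast hk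
  · intro z hz
    simp only [Finset.mem_image, mem_range] at hz
    obtain ⟨r, hr, rfl⟩ := hz
    rw [eval_smul, eval_pow, eval_X, eval_finset_sum]
    have hterm : ∀ k ∈ range (n + 1),
        ((((n.factorial / k.factorial : ℕ) : ℤ) *
          ∑ j ∈ range (k + 1), (-1) ^ (k - j) * (k.choose j : ℤ) * (j : ℤ) ^ m) •
            descPochhammer ℤ k).eval (r : ℤ)
        = (n.factorial : ℤ) * ((r.choose k : ℤ) *
            ∑ j ∈ range (k + 1), (-1) ^ (k - j) * (k.choose j : ℤ) * (j : ℤ) ^ m) := by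
      intro k hk
      simp only [mem_range] at hk
      rw [eval_smul, descPochhammer_eval_eq_descFactorial, smul_eq_mul,
        Nat.descFactorial_eq_factorial_mul_choose, Nat.cast_mul]
      have hfac : ((n.factorial / k.factorial : ℕ) : ℤ) * (k.factorial : ℤ)
          = (n.factorial : ℤ) := by
        rw [← Nat.cast_mul, Nat.div_mul_cancel (Nat.factorial_dvd_factorial (by omega))]
      linear_combination (∑ j ∈ range (k + 1), (-1 : ℤ) ^ (k - j) * (k.choose j : ℤ) * (j : ℤ) ^ m)
        * (r.choose k : ℤ) * hfac
    rw [Finset.sum_congr rfl hterm, ← Finset.mul_sum,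
      newton_inv (fun j => (j : ℤ) ^ m) n r (by omega), smul_eq_mul]

lemma key_scalar {B : Type*} [CommRing B] [BinomialRing B] (n m : ℕ) (hm : m ≤ n) (r : B) :
    r ^ m = ∑ k ∈ range (n + 1),
      (∑ j ∈ range (k + 1), (-1 : ℤ) ^ (k - j) * (k.choose j : ℤ) * (j : ℤ) ^ m) •
        Ring.choose r k := by
  haveI := BinomialRing.toIsAddTorsionFree (R := B)
  apply nsmul_right_injective (Nat.factorial_ne_zero n)
  simp only [smul_eq_mul]
  have h2 := congrArg (fun p : ℤ[X] => p.smeval r) (key_poly n m hm)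
  rw [Polynomial.smeval_smul, Polynomial.smeval_X_pow] at h2
  have h3 : (∑ k ∈ range (n + 1),
        (((n.factorial / k.factorial : ℕ) : ℤ) *
          ∑ j ∈ range (k + 1), (-1) ^ (k - j) * (k.choose j : ℤ) * (j : ℤ) ^ m) •
            descPochhammer ℤ k : ℤ[X]).smeval r
      = ∑ k ∈ range (n + 1),
        (((n.factorial / k.factorial : ℕ) : ℤ) *
          ∑ j ∈ range (k + 1), (-1) ^ (k - j) * (k.choose j : ℤ) * (j : ℤ) ^ m) •
            (descPochhammer ℤ k).smeval r := by
    simp only [← Polynomial.smeval.linearMap_apply (R := ℤ) (x := r), map_sum, map_smul]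
  rw [h3] at h2
  have h4 : ∀ k ∈ range (n + 1),
      (((n.factorial / k.factorial : ℕ) : ℤ) *
          ∑ j ∈ range (k + 1), (-1) ^ (k - j) * (k.choose j : ℤ) * (j : ℤ) ^ m) •
            (descPochhammer ℤ k).smeval r
      = n.factorial •
          ((∑ j ∈ range (k + 1), (-1 : ℤ) ^ (k - j) * (k.choose j : ℤ) * (j : ℤ) ^ m) •
            Ring.choose r k) := by
    intro k hk
    simp only [mem_range] at hk
    rw [Ring.descPochhammer_eq_factorial_smul_choose,
      ← natCast_zsmul (Ring.choose r k) k.factorial, smul_smul,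
      ← natCast_zsmul ((∑ j ∈ range (k + 1), (-1 : ℤ) ^ (k - j) * (k.choose j : ℤ) * (j : ℤ) ^ m) •
        Ring.choose r k) n.factorial, smul_smul]
    congr 1
    rw [mul_comm ((n.factorial : ℤ))
      (∑ j ∈ range (k + 1), (-1 : ℤ) ^ (k - j) * (k.choose j : ℤ) * (j : ℤ) ^ m), mul_assoc,
      mul_comm, mul_assoc, ← Nat.cast_mul,
      Nat.mul_div_cancel' (Nat.factorial_dvd_factorial (by omega : k ≤ n))]
  rw [Finset.sum_congr rfl h4, ← Finset.smul_sum, natCast_zsmul] at h2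
  exact h2

/-- **Every strict polynomial map of degree ≤ n is numerical of degree ≤ n:** a map
admitting monomial expansions of degree ≤ n is numerical of degree ≤ n. -/
theorem strict_polynomial_is_numerical {B M N : Type*} [CommRing B] [BinomialRing B]
    [AddCommGroup M] [Module B M] [AddCommGroup N] [Module B N]
    (n : ℕ) (φ : M → N)
    (h : ∀ (k : ℕ) (u : Fin k → M),
      ∃ w : (Fin k → ℕ) → N,
        (∀ q : Fin k → ℕ, n < ∑ i, q i → w q = 0) ∧
        ∀ a : Fin k → B,
          φ (∑ i, a i • u i) =
            ∑ q ∈ multiIdx k n, (∏ i, (a i) ^ (q i)) • w q) :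
    IsNumerical B φ n := by
  classical
  constructor
  · -- part (i): cross-effect vanishing
    intro x
    obtain ⟨w, hw0, hwe⟩ := h (n + 1) x
    have hφ : ∀ S : Finset (Fin (n + 1)), φ (∑ i ∈ S, x i)
        = ∑ q ∈ multiIdx (n + 1) n,
            (if (Finset.univ.filter fun i => q i ≠ 0) ⊆ S then w q else 0) := by
      intro S
      have h1 : (∑ i, (if i ∈ S then (1 : B) else 0) • x i) = ∑ i ∈ S, x i := by
        simp only [ite_smul, one_smul, zero_smul]
        rw [Finset.sum_ite_mem, Finset.univ_inter]
      have h2 := hwe (fun i => if i ∈ S then (1 : B) else 0)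
      rw [h1] at h2
      rw [h2]
      apply Finset.sum_congr rfl
      intro q _
      by_cases hT : (Finset.univ.filter fun i => q i ≠ 0) ⊆ S
      · rw [if_pos hT]
        have : (∏ i, (if i ∈ S then (1 : B) else 0) ^ (q i)) = 1 := by
          apply Finset.prod_eq_one
          intro i _
          by_cases hiS : i ∈ S
          · rw [if_pos hiS, one_pow]
          · have hq : q i = 0 := by
              by_contra hq
              exact hiS (hT (Finset.mem_filter.mpr ⟨Finset.mem_univ i, hq⟩))
            rw [if_neg hiS, hq, pow_zero]
        rw [this, one_smul]
      · rw [if_neg hT]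
        obtain ⟨i, hiT, hiS⟩ := Finset.not_subset.mp hT
        have : (∏ i, (if i ∈ S then (1 : B) else 0) ^ (q i)) = 0 := by
          apply Finset.prod_eq_zero (Finset.mem_univ i)
          rw [if_neg hiS, zero_pow (Finset.mem_filter.mp hiT).2]
        rw [this, zero_smul]
    simp only [hφ, Finset.smul_sum]
    rw [Finset.sum_comm]
    apply Finset.sum_eq_zero
    intro q hq
    have hsum : ∑ i, q i ≤ n := (Finset.mem_filter.mp hq).2
    obtain ⟨i0, hi0⟩ : ∃ i0, q i0 = 0 := by
      by_contra hall
      push_neg at hall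
      have h1 : ∀ i ∈ (Finset.univ : Finset (Fin (n + 1))), 1 ≤ q i :=
        fun i _ => Nat.one_le_iff_ne_zero.mpr (hall i)
      have h2 : (n + 1 : ℕ) ≤ ∑ i, q i := by
        calc (n + 1 : ℕ) = ∑ _i : Fin (n + 1), 1 := by simp
          _ ≤ ∑ i, q i := Finset.sum_le_sum h1
      omega
    simp only [smul_ite, smul_zero]
    rw [← Finset.sum_filter, ← Finset.sum_smul]
    convert zero_smul ℤ (w q)
    -- ∑ S ∈ filter, (-1)^(n+1-S.card) = 0
    set T := (Finset.univ.filter fun i => q i ≠ 0) with hTdef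
    rw [Finset.sum_nbij' (i := fun S => Sᶜ) (j := fun U => Uᶜ)
      (t := Tᶜ.powerset) (g := fun U => (-1 : ℤ) ^ U.card)]
    · exact Finset.sum_powerset_neg_one_pow_card_of_nonempty
        ⟨i0, Finset.mem_compl.mpr (fun hmem => (Finset.mem_filter.mp hmem).2 hi0)⟩
    · intro S hS
      rw [Finset.mem_powerset, Finset.compl_subset_compl]
      exact (Finset.mem_filter.mp hS).2
    · intro U hU
      rw [Finset.mem_filter]
      refine ⟨Finset.mem_univ _, ?_⟩
      rw [← Finset.compl_subset_compl, compl_compl]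
      exact Finset.mem_powerset.mp hU
    · intro S _; exact compl_compl S
    · intro U _; exact compl_compl U
    · intro S _
      congr 1
      rw [Finset.card_compl, Fintype.card_fin]
  · -- part (ii)
    intro r x
    obtain ⟨w, hw0, hwe⟩ := h 1 (fun _ => x)
    have hA : ∀ a : B, φ (a • x) = ∑ m ∈ range (n + 1), a ^ m • w (fun _ => m) := by
      intro a
      have h2 := hwe (fun _ => a)
      simp only [Fin.sum_univ_one, Fin.prod_univ_one] at h2
      rw [h2]
      apply Finset.sum_nbij' (i := fun q => q 0) (j := fun m => fun _ => m)
      · intro q hq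
        rw [Finset.mem_range]
        have := (Finset.mem_filter.mp hq).2
        simp only [Fin.sum_univ_one] at this
        omega
      · intro m hm
        rw [Finset.mem_range] at hm
        rw [multiIdx, Finset.mem_filter, Finset.mem_Iic]
        constructor
        · intro i; exact Nat.lt_succ_iff.mp hm
        · simp only [Fin.sum_univ_one]; omega
      · intro q _
        funext i
        exact congrArg q (Subsingleton.elim 0 i)
      · intro m _; rfl
      · intro q _
        have : (fun _ : Fin 1 => q 0) = q := by
          funext i
          exact congrArg q (Subsingleton.elim 0 i)
        rw [this]
    have hB : ∀ j : ℕ, φ (j • x) = ∑ m ∈ range (n + 1), ((j : B)) ^ m • w (fun _ => m) := by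
      intro j
      rw [← Nat.cast_smul_eq_nsmul B j x, hA]
    simp only [delta, hB, hA, Finset.smul_sum]
    simp only [← Int.cast_smul_eq_zsmul B, smul_smul]
    have swap : ∀ (F : ℕ → ℕ → ℕ → N),
        ∑ k ∈ range (n + 1), ∑ j ∈ range (k + 1), ∑ m ∈ range (n + 1), F k j m
        = ∑ m ∈ range (n + 1), ∑ k ∈ range (n + 1), ∑ j ∈ range (k + 1), F k j m := by
      intro F
      rw [Finset.sum_congr rfl fun k _ =>
          Finset.sum_comm (s := range (k + 1)) (t := range (n + 1)) (f := fun j m' => F k j m'),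
        Finset.sum_comm]
    rw [swap]
    apply Finset.sum_congr rfl
    intro m hm
    rw [Finset.mem_range] at hm
    simp only [← Finset.sum_smul]
    congr 1
    rw [key_scalar n m (by omega) r]
    apply Finset.sum_congr rfl
    intro k _
    rw [zsmul_eq_mul, Int.cast_sum, Finset.sum_mul]
    apply Finset.sum_congr rfl
    intro j _
    push_cast
    ring
end
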